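/- arXiv:1811.03366 — 3 statements merged into one kernel-verified Lean document; each statement's English description precedes it below -/
import Mathlib

section
/- Let Ω ⊆ ℝ² be open, let w : ℝ² → ℂ be twice continuously differentiable on Ω, and let λ, h, k ∈ ℂ with k ≠ 0, h² + λ² = k², and ∂₁∂₁w + ∂₂∂₂w + λ²w = 0 on Ω. Define on Ω × ℝ the fields M(x) = (∂₂w(x̂), −∂₁w(x̂), 0)·e^{i h x₃} and N(x) = (1/k)·(i h ∂₁w(x̂), i h ∂₂w(x̂), λ² w(x̂))·e^{i h x₃}, where x = (x̂, x₃) with x̂ ∈ ℝ². Then curl M = k·N and curl N = k·M at every point of Ω × ℝ. -/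
/-- Partial derivative in the `i`-th coordinate direction of a function on `ℝ²`. -/
noncomputable def pd2 (i : Fin 2) (f : (Fin 2 → ℝ) → ℂ) (x : Fin 2 → ℝ) : ℂ :=
  fderiv ℝ f x (Pi.single i 1)

/-- Partial derivative in the `i`-th coordinate direction of a function on `ℝ³`. -/
noncomputable def pd3 (i : Fin 3) (f : (Fin 3 → ℝ) → ℂ) (x : Fin 3 → ℝ) : ℂ :=
  fderiv ℝ f x (Pi.single i 1)

/-- The curl of a complex vector field on `ℝ³`. -/
noncomputable def curl3 (F : (Fin 3 → ℝ) → Fin 3 → ℂ) (x : Fin 3 → ℝ) : Fin 3 → ℂ :=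
  ![pd3 1 (fun y => F y 2) x - pd3 2 (fun y => F y 1) x,
    pd3 2 (fun y => F y 0) x - pd3 0 (fun y => F y 2) x,
    pd3 0 (fun y => F y 1) x - pd3 1 (fun y => F y 0) x]


noncomputable def Pproj : (Fin 3 → ℝ) →L[ℝ] (Fin 2 → ℝ) :=
  ContinuousLinearMap.pi ![ContinuousLinearMap.proj 0, ContinuousLinearMap.proj 1]

lemma Pproj_apply (y : Fin 3 → ℝ) : Pproj y = ![y 0, y 1] := by
  funext i
  fin_cases i <;> simp [Pproj]

noncomputable def C2 : (Fin 3 → ℝ) →L[ℝ] ℂ :=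
  Complex.ofRealCLM.comp (ContinuousLinearMap.proj 2)

lemma hasFDerivAt_key (f : (Fin 2 → ℝ) → ℂ) (h : ℂ) (x : Fin 3 → ℝ)
    (hf : DifferentiableAt ℝ f ![x 0, x 1]) :
    HasFDerivAt (fun y : Fin 3 → ℝ => f ![y 0, y 1] * Complex.exp (Complex.I * h * ((y 2 : ℝ) : ℂ)))
      ((f ![x 0, x 1]) • ((Complex.exp (Complex.I * h * ((x 2 : ℝ) : ℂ))) • ((Complex.I * h) • C2))
        + (Complex.exp (Complex.I * h * ((x 2 : ℝ) : ℂ))) • ((fderiv ℝ f ![x 0, x 1]).comp Pproj)) x := by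
  have h1 : HasFDerivAt (fun y : Fin 3 → ℝ => f ![y 0, y 1])
      ((fderiv ℝ f ![x 0, x 1]).comp Pproj) x := by
    have hfP : HasFDerivAt f (fderiv ℝ f ![x 0, x 1]) (Pproj x) := by
      rw [Pproj_apply]; exact hf.hasFDerivAt
    have := hfP.comp x (Pproj.hasFDerivAt (x := x))
    have heq : (f ∘ ⇑Pproj) = fun y : Fin 3 → ℝ => f ![y 0, y 1] := by
      funext y; simp [Function.comp, Pproj_apply]
    rwa [heq] at this
  have h2 : HasFDerivAt (fun y : Fin 3 → ℝ => Complex.exp (Complex.I * h * ((y 2 : ℝ) : ℂ)))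
      ((Complex.exp (Complex.I * h * ((x 2 : ℝ) : ℂ))) • ((Complex.I * h) • C2)) x := by
    have hL : HasFDerivAt (fun y : Fin 3 → ℝ => Complex.I * h * ((y 2 : ℝ) : ℂ))
        ((Complex.I * h) • C2) x := by
      have := ((Complex.I * h) • C2).hasFDerivAt (x := x)
      convert this using 2
      simp [C2]
    exact hL.cexp
  exact h1.mul h2

lemma pd3_key01 (f : (Fin 2 → ℝ) → ℂ) (h : ℂ) (x : Fin 3 → ℝ)
    (hf : DifferentiableAt ℝ f ![x 0, x 1]) (i : Fin 2) :
    pd3 (Fin.castSucc i) (fun y : Fin 3 → ℝ => f ![y 0, y 1]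
        * Complex.exp (Complex.I * h * ((y 2 : ℝ) : ℂ))) x =
      pd2 i f ![x 0, x 1] * Complex.exp (Complex.I * h * ((x 2 : ℝ) : ℂ)) := by
  have := (hasFDerivAt_key f h x hf).fderiv
  rw [pd3, this]
  have hP : Pproj (Pi.single (Fin.castSucc i) 1) = Pi.single i 1 := by
    rw [Pproj_apply]
    funext j
    fin_cases i <;> fin_cases j <;> simp [Pi.single, Function.update]
  have hC : C2 (Pi.single (Fin.castSucc i) 1) = 0 := by
    fin_cases i <;> simp [C2, Pi.single, Function.update]
  simp [hP, hC, pd2, smul_eq_mul]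
  ring

lemma pd3_key2 (f : (Fin 2 → ℝ) → ℂ) (h : ℂ) (x : Fin 3 → ℝ)
    (hf : DifferentiableAt ℝ f ![x 0, x 1]) :
    pd3 2 (fun y : Fin 3 → ℝ => f ![y 0, y 1]
        * Complex.exp (Complex.I * h * ((y 2 : ℝ) : ℂ))) x =
      Complex.I * h * f ![x 0, x 1] * Complex.exp (Complex.I * h * ((x 2 : ℝ) : ℂ)) := by
  have := (hasFDerivAt_key f h x hf).fderiv
  rw [pd3, this]
  have hP : Pproj (Pi.single (2 : Fin 3) 1) = 0 := by
    rw [Pproj_apply]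
    funext j
    fin_cases j <;> simp [Pi.single, Function.update]
  have hC : C2 (Pi.single (2 : Fin 3) 1) = 1 := by
    simp [C2, Pi.single]
  simp [hP, hC, smul_eq_mul]
  ring

lemma pd2_const_mul (c : ℂ) (g : (Fin 2 → ℝ) → ℂ) (x : Fin 2 → ℝ)
    (hg : DifferentiableAt ℝ g x) (j : Fin 2) :
    pd2 j (fun q => c * g q) x = c * pd2 j g x := by
  simp [pd2, fderiv_const_mul hg c]

lemma pd2_neg (g : (Fin 2 → ℝ) → ℂ) (x : Fin 2 → ℝ) (j : Fin 2) :
    pd2 j (fun q => -(g q)) x = -(pd2 j g x) := by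
  simp [pd2, fderiv_neg]

example : (0 : Fin 3) = Fin.castSucc 0 := rfl
example : (1 : Fin 3) = Fin.castSucc 1 := rfl

/-- The two families of waveguide modes are intertwined by the curl:
`curl M = k·N` and `curl N = k·M`. -/
theorem curl_waveguide_modes (Ω : Set (Fin 2 → ℝ)) (hΩ : IsOpen Ω)
    (w : (Fin 2 → ℝ) → ℂ) (hw : ContDiffOn ℝ 2 w Ω)
    (lam h k : ℂ) (hk : k ≠ 0) (hrel : h ^ 2 + lam ^ 2 = k ^ 2)
    (hHelm : ∀ xh ∈ Ω, pd2 0 (pd2 0 w) xh + pd2 1 (pd2 1 w) xh + lam ^ 2 * w xh = 0)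
    (M N : (Fin 3 → ℝ) → Fin 3 → ℂ)
    (hM : ∀ x : Fin 3 → ℝ, ∀ i : Fin 3, M x i =
      ![pd2 1 w ![x 0, x 1], -(pd2 0 w ![x 0, x 1]), 0] i
        * Complex.exp (Complex.I * h * ((x 2 : ℝ) : ℂ)))
    (hN : ∀ x : Fin 3 → ℝ, ∀ i : Fin 3, N x i =
      (1 / k) * ![Complex.I * h * pd2 0 w ![x 0, x 1],
                  Complex.I * h * pd2 1 w ![x 0, x 1],
                  lam ^ 2 * w ![x 0, x 1]] i
        * Complex.exp (Complex.I * h * ((x 2 : ℝ) : ℂ))) :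
    ∀ x : Fin 3 → ℝ, ![x 0, x 1] ∈ Ω →
      (∀ i, curl3 M x i = k * N x i) ∧ (∀ i, curl3 N x i = k * M x i) := by
  intro x hx
  have hmem : Ω ∈ nhds ![x 0, x 1] := hΩ.mem_nhds hx
  have hc : ContDiffAt ℝ 2 w ![x 0, x 1] := hw.contDiffAt hmem
  have dw : DifferentiableAt ℝ w ![x 0, x 1] := hc.differentiableAt (by norm_num)
  have hfd : ContDiffAt ℝ 1 (fderiv ℝ w) ![x 0, x 1] := hc.fderiv_right (by norm_num)
  have dfd : DifferentiableAt ℝ (fderiv ℝ w) ![x 0, x 1] := hfd.differentiableAt (by norm_num)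
  have dpd : ∀ i : Fin 2, DifferentiableAt ℝ (pd2 i w) ![x 0, x 1] := by
    intro i
    exact dfd.clm_apply (differentiableAt_const _)
  have hdd : ∀ i j : Fin 2, pd2 i (pd2 j w) ![x 0, x 1]
      = fderiv ℝ (fderiv ℝ w) ![x 0, x 1] (Pi.single i 1) (Pi.single j 1) := by
    intro i j
    have h0 : pd2 i (pd2 j w) ![x 0, x 1]
        = fderiv ℝ (fun y => fderiv ℝ w y (Pi.single j 1)) ![x 0, x 1] (Pi.single i 1) := rfl
    rw [h0, fderiv_clm_apply dfd (differentiableAt_const _)]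
    simp
  have hsymm : pd2 0 (pd2 1 w) ![x 0, x 1] = pd2 1 (pd2 0 w) ![x 0, x 1] := by
    rw [hdd, hdd]
    exact hc.isSymmSndFDerivAt (by norm_num) _ _
  have hH := hHelm _ hx
  have hI : Complex.I ^ 2 = -1 := Complex.I_sq
  -- component functions
  have hM0 : (fun y => M y 0) = fun y : Fin 3 → ℝ =>
      (fun q => pd2 1 w q) ![y 0, y 1] * Complex.exp (Complex.I * h * ((y 2 : ℝ) : ℂ)) := by
    funext y; rw [hM y 0]; simp
  have hM1 : (fun y => M y 1) = fun y : Fin 3 → ℝ =>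
      (fun q => -(pd2 0 w q)) ![y 0, y 1] * Complex.exp (Complex.I * h * ((y 2 : ℝ) : ℂ)) := by
    funext y; rw [hM y 1]; simp
  have hM2 : (fun y => M y 2) = fun _ : Fin 3 → ℝ => (0 : ℂ) := by
    funext y; rw [hM y 2]; simp
  have hN0 : (fun y => N y 0) = fun y : Fin 3 → ℝ =>
      (fun q => 1 / k * (Complex.I * h * pd2 0 w q)) ![y 0, y 1]
        * Complex.exp (Complex.I * h * ((y 2 : ℝ) : ℂ)) := by
    funext y; rw [hN y 0]; simp
  have hN1 : (fun y => N y 1) = fun y : Fin 3 → ℝ =>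
      (fun q => 1 / k * (Complex.I * h * pd2 1 w q)) ![y 0, y 1]
        * Complex.exp (Complex.I * h * ((y 2 : ℝ) : ℂ)) := by
    funext y; rw [hN y 1]; simp
  have hN2 : (fun y => N y 2) = fun y : Fin 3 → ℝ =>
      (fun q => 1 / k * (lam ^ 2 * w q)) ![y 0, y 1]
        * Complex.exp (Complex.I * h * ((y 2 : ℝ) : ℂ)) := by
    funext y; rw [hN y 2]; simp
  -- differentiability of component profiles
  have dM1 : DifferentiableAt ℝ (fun q => -(pd2 0 w q)) ![x 0, x 1] := (dpd 0).neg
  have dN0 : DifferentiableAt ℝ (fun q => 1 / k * (Complex.I * h * pd2 0 w q)) ![x 0, x 1] :=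
    ((dpd 0).const_mul (Complex.I * h)).const_mul (1 / k)
  have dN1 : DifferentiableAt ℝ (fun q => 1 / k * (Complex.I * h * pd2 1 w q)) ![x 0, x 1] :=
    ((dpd 1).const_mul (Complex.I * h)).const_mul (1 / k)
  have dN2 : DifferentiableAt ℝ (fun q => 1 / k * (lam ^ 2 * w q)) ![x 0, x 1] :=
    (dw.const_mul (lam ^ 2)).const_mul (1 / k)
  have pdzero : ∀ j : Fin 3, pd3 j (fun _ : Fin 3 → ℝ => (0 : ℂ)) x = 0 := by
    intro j; simp [pd3]
  have key0 := fun f hf => pd3_key01 f h x hf 0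
  have key1 := fun f hf => pd3_key01 f h x hf 1
  rw [show Fin.castSucc (0 : Fin 2) = (0 : Fin 3) from rfl] at key0
  rw [show Fin.castSucc (1 : Fin 2) = (1 : Fin 3) from rfl] at key1
  constructor
  · intro i
    fin_cases i
    · show pd3 1 (fun y => M y 2) x - pd3 2 (fun y => M y 1) x = k * N x 0
      rw [hM2, hM1, pdzero, pd3_key2 _ h x dM1, hN x 0]
      simp only [Matrix.cons_val_zero]
      field_simp
      ring
    · show pd3 2 (fun y => M y 0) x - pd3 0 (fun y => M y 2) x = k * N x 1
      rw [hM2, hM0, pdzero, pd3_key2 _ h x (dpd 1), hN x 1]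
      simp only [Matrix.cons_val_one, Matrix.head_cons]
      field_simp
      simp only [Matrix.cons_val_zero]
      ring
    · show pd3 0 (fun y => M y 1) x - pd3 1 (fun y => M y 0) x = k * N x 2
      rw [hM1, hM0, key0 _ dM1, key1 _ (dpd 1), hN x 2]
      simp only [Matrix.cons_val_two, Matrix.tail_cons, Matrix.head_cons]
      rw [pd2_neg]
      field_simp
      linear_combination (-1 : ℂ) * hH
  · intro i
    fin_cases i
    · show pd3 1 (fun y => N y 2) x - pd3 2 (fun y => N y 1) x = k * M x 0
      rw [hN2, hN1, key1 _ dN2, pd3_key2 _ h x dN1, hM x 0]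
      simp only [Matrix.cons_val_zero]
      rw [pd2_const_mul _ _ _ (dw.const_mul (lam ^ 2)),
          pd2_const_mul _ _ _ dw]
      field_simp
      linear_combination (pd2 1 w ![x 0, x 1]) * hrel
        + (-(h ^ 2) * pd2 1 w ![x 0, x 1]) * hI
    · show pd3 2 (fun y => N y 0) x - pd3 0 (fun y => N y 2) x = k * M x 1
      rw [hN0, hN2, pd3_key2 _ h x dN0, key0 _ dN2, hM x 1]
      simp only [Matrix.cons_val_one, Matrix.head_cons]
      rw [pd2_const_mul _ _ _ (dw.const_mul (lam ^ 2)),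
          pd2_const_mul _ _ _ dw]
      field_simp
      simp only [Matrix.cons_val_zero]
      linear_combination (-(pd2 0 w ![x 0, x 1])) * hrel
        + (h ^ 2 * pd2 0 w ![x 0, x 1]) * hI
    · show pd3 0 (fun y => N y 1) x - pd3 1 (fun y => N y 0) x = k * M x 2
      rw [hN1, hN0, key0 _ dN1, key1 _ dN0, hM x 2]
      simp only [Matrix.cons_val_two, Matrix.tail_cons, Matrix.head_cons]
      rw [pd2_const_mul _ _ _ ((dpd 1).const_mul (Complex.I * h)),
          pd2_const_mul _ _ _ (dpd 1),
          pd2_const_mul _ _ _ ((dpd 0).const_mul (Complex.I * h)),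
          pd2_const_mul _ _ _ (dpd 0)]
      rw [hsymm]
      ring
end

section
/- Let Ω ⊆ ℝ² be open, let w : ℝ² → ℂ be three times continuously differentiable on Ω, and let μ, g, k ∈ ℂ with k ≠ 0, g² + μ² = k², and ∂₁∂₁w + ∂₂∂₂w + μ²w = 0 on Ω. Define on Ω × ℝ the field N(x) = (1/k)·(i g ∂₁w(x̂), i g ∂₂w(x̂), μ² w(x̂))·e^{i g x₃}, where x = (x̂, x₃) with x̂ ∈ ℝ². Then: (a) curl(curl N)(x) − k²·N(x) = 0 for every x ∈ Ω × ℝ; and (b) for every x = (x̂, x₃) ∈ Ω × ℝ and every vector ν = (ν₁, ν₂, 0) ∈ ℝ³ one has ν × N(x) = (e^{i g x₃}/k)·( μ²w(x̂)·(ν₂, −ν₁, 0) + i g·(ν₁∂₂w(x̂) − ν₂∂₁w(x̂))·(0,0,1) ); in particular ν × N(x) = 0 whenever w(x̂) = 0 and ν₁∂₂w(x̂) = ν₂∂₁w(x̂). -/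
/-- Cross product of complex 3-vectors. -/
def crossC (a b : Fin 3 → ℂ) : Fin 3 → ℂ :=
  ![a 1 * b 2 - a 2 * b 1, a 2 * b 0 - a 0 * b 2, a 0 * b 1 - a 1 * b 0]

noncomputable def pi32 : (Fin 3 → ℝ) →L[ℝ] (Fin 2 → ℝ) :=
  ContinuousLinearMap.pi ![ContinuousLinearMap.proj 0, ContinuousLinearMap.proj 1]

lemma pi32_apply (y : Fin 3 → ℝ) : pi32 y = ![y 0, y 1] := by
  funext i; fin_cases i <;> rfl

lemma pi32_single0 : pi32 (Pi.single (0 : Fin 3) (1:ℝ)) = Pi.single (0 : Fin 2) 1 := by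
  rw [pi32_apply]; funext j; fin_cases j <;> simp

lemma pi32_single1 : pi32 (Pi.single (1 : Fin 3) (1:ℝ)) = Pi.single (1 : Fin 2) 1 := by
  rw [pi32_apply]; funext j; fin_cases j <;> simp

lemma pi32_single2 : pi32 (Pi.single (2 : Fin 3) (1:ℝ)) = 0 := by
  rw [pi32_apply]; funext j; fin_cases j <;> simp

lemma single2_0 : (Pi.single (0:Fin 2) (1:ℝ)) = ![1,0] := by
  funext j; fin_cases j <;> simp

lemma single2_1 : (Pi.single (1:Fin 2) (1:ℝ)) = ![0,1] := by
  funext j; fin_cases j <;> simp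

lemma vec2_zero : (![0,0] : Fin 2 → ℝ) = 0 := by
  funext j; fin_cases j <;> simp

lemma pd3_model (f : (Fin 2 → ℝ) → ℂ) (c g : ℂ) (x : Fin 3 → ℝ)
    (hf : DifferentiableAt ℝ f ![x 0, x 1]) (i : Fin 3) :
    pd3 i (fun y => c * f ![y 0, y 1] * Complex.exp (Complex.I * g * ((y 2 : ℝ) : ℂ))) x
    = ![c * pd2 0 f ![x 0, x 1], c * pd2 1 f ![x 0, x 1],
        c * f ![x 0, x 1] * (Complex.I * g)] i *
        Complex.exp (Complex.I * g * ((x 2 : ℝ) : ℂ)) := by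
  set L : (Fin 3 → ℝ) →L[ℝ] ℂ :=
    (Complex.I * g) • (Complex.ofRealCLM.comp (ContinuousLinearMap.proj 2)) with hLdef
  have hLapp : ∀ y : Fin 3 → ℝ, L y = Complex.I * g * ((y 2 : ℝ) : ℂ) := by
    intro y; simp [hLdef, smul_eq_mul]
  have hf' : DifferentiableAt ℝ f (pi32 x) := by rw [pi32_apply]; exact hf
  have hG : HasFDerivAt (fun y => c * f (pi32 y))
      (c • ((fderiv ℝ f (pi32 x)).comp pi32)) x :=
    (hf'.hasFDerivAt.comp x pi32.hasFDerivAt).const_mul c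
  have hH : HasFDerivAt (fun y : Fin 3 → ℝ => Complex.exp (L y))
      (Complex.exp (L x) • L) x :=
    (Complex.hasDerivAt_exp (L x)).comp_hasFDerivAt x L.hasFDerivAt
  have hF := hG.mul hH
  have heq : (fun y : Fin 3 → ℝ => c * f ![y 0, y 1] *
      Complex.exp (Complex.I * g * ((y 2 : ℝ) : ℂ)))
      = fun y => (c * f (pi32 y)) * Complex.exp (L y) := by
    funext y; rw [pi32_apply, hLapp]
  rw [pd3, heq, show (fun y => c * f (pi32 y) * Complex.exp (L y)) =
    ((fun y => c * f (pi32 y)) * fun y => Complex.exp (L y)) from rfl, hF.fderiv]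
  simp only [ContinuousLinearMap.add_apply, ContinuousLinearMap.smul_apply,
    ContinuousLinearMap.coe_comp', Function.comp_apply, smul_eq_mul]
  fin_cases i <;>
    simp [pi32_single0, pi32_single1, pi32_single2, hLapp, pi32_apply, pd2,
      single2_0, single2_1, vec2_zero] <;> ring

lemma pd2_clm (w : (Fin 2 → ℝ) → ℂ) (j : Fin 2) :
    pd2 j w = fun y => fderiv ℝ w y (Pi.single j 1) := rfl

lemma pd2_contDiffOn (Ω : Set (Fin 2 → ℝ)) (hΩ : IsOpen Ω) (w : (Fin 2 → ℝ) → ℂ)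
    (hw : ContDiffOn ℝ 3 w Ω) (j : Fin 2) : ContDiffOn ℝ 2 (pd2 j w) Ω := by
  have hfd : ContDiffOn ℝ 2 (fderiv ℝ w) Ω := hw.fderiv_of_isOpen hΩ (by norm_num)
  rw [pd2_clm]
  exact hfd.clm_apply contDiffOn_const

lemma pd2_symm (Ω : Set (Fin 2 → ℝ)) (hΩ : IsOpen Ω) (w : (Fin 2 → ℝ) → ℂ)
    (hw : ContDiffOn ℝ 3 w Ω) {z : Fin 2 → ℝ} (hz : z ∈ Ω) :
    pd2 0 (pd2 1 w) z = pd2 1 (pd2 0 w) z := by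
  have hmem := hΩ.mem_nhds hz
  have hC : ContDiffAt ℝ 3 w z := hw.contDiffAt hmem
  have hs := hC.isSymmSndFDerivAt (by norm_num)
  have hfd : ContDiffOn ℝ 2 (fderiv ℝ w) Ω := hw.fderiv_of_isOpen hΩ (by norm_num)
  have hdfd : DifferentiableAt ℝ (fderiv ℝ w) z :=
    (hfd.contDiffAt hmem).differentiableAt (by norm_num)
  have key : ∀ u v : Fin 2 → ℝ,
      fderiv ℝ (fun y => fderiv ℝ w y v) z u = fderiv ℝ (fderiv ℝ w) z u v := by
    intro u v
    rw [fderiv_clm_apply hdfd (differentiableAt_const v)]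
    simp
  show fderiv ℝ (fun y => fderiv ℝ w y (Pi.single 1 1)) z (Pi.single 0 1)
      = fderiv ℝ (fun y => fderiv ℝ w y (Pi.single 0 1)) z (Pi.single 1 1)
  rw [key, key]
  exact hs _ _

/-- The second-family waveguide mode `N` satisfies the time-harmonic Maxwell equation
`curl curl N − k²N = 0` in `Ω × ℝ`, and its tangential trace against a horizontal
vector `ν = (ν₁, ν₂, 0)` is
`ν × N = (e^{igx₃}/k)·(μ²w·(ν₂,−ν₁,0) + ig(ν₁∂₂w − ν₂∂₁w)·(0,0,1))`. -/
theorem mode_N_maxwell_and_bc (Ω : Set (Fin 2 → ℝ)) (hΩ : IsOpen Ω)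
    (w : (Fin 2 → ℝ) → ℂ) (hw : ContDiffOn ℝ 3 w Ω)
    (mu g k : ℂ) (hk : k ≠ 0) (hrel : g ^ 2 + mu ^ 2 = k ^ 2)
    (hHelm : ∀ xh ∈ Ω, pd2 0 (pd2 0 w) xh + pd2 1 (pd2 1 w) xh + mu ^ 2 * w xh = 0)
    (N : (Fin 3 → ℝ) → Fin 3 → ℂ)
    (hN : ∀ x : Fin 3 → ℝ, ∀ i : Fin 3, N x i =
      (1 / k) * ![Complex.I * g * pd2 0 w ![x 0, x 1],
                  Complex.I * g * pd2 1 w ![x 0, x 1],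
                  mu ^ 2 * w ![x 0, x 1]] i
        * Complex.exp (Complex.I * g * ((x 2 : ℝ) : ℂ))) :
    ∀ x : Fin 3 → ℝ, ![x 0, x 1] ∈ Ω →
      (∀ i, curl3 (curl3 N) x i - k ^ 2 * N x i = 0) ∧
      (∀ ν₁ ν₂ : ℝ, ∀ i : Fin 3,
        crossC ![(ν₁ : ℂ), (ν₂ : ℂ), 0] (N x) i =
          (Complex.exp (Complex.I * g * ((x 2 : ℝ) : ℂ)) / k) *
            (mu ^ 2 * w ![x 0, x 1] * ![(ν₂ : ℂ), -(ν₁ : ℂ), 0] i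
              + Complex.I * g *
                ((ν₁ : ℂ) * pd2 1 w ![x 0, x 1] - (ν₂ : ℂ) * pd2 0 w ![x 0, x 1])
                * ![0, 0, 1] i)) ∧
      (∀ ν₁ ν₂ : ℝ,
        w ![x 0, x 1] = 0 →
        (ν₁ : ℂ) * pd2 1 w ![x 0, x 1] = (ν₂ : ℂ) * pd2 0 w ![x 0, x 1] →
          ∀ i, crossC ![(ν₁ : ℂ), (ν₂ : ℂ), 0] (N x) i = 0) := by
  have hdiffw : ∀ z ∈ Ω, DifferentiableAt ℝ w z := fun z hz =>
    (hw.contDiffAt (hΩ.mem_nhds hz)).differentiableAt (by norm_num)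
  have hdiffpd : ∀ (j : Fin 2), ∀ z ∈ Ω, DifferentiableAt ℝ (pd2 j w) z := fun j z hz =>
    ((pd2_contDiffOn Ω hΩ w hw j).contDiffAt (hΩ.mem_nhds hz)).differentiableAt (by norm_num)
  have hN0 : (fun y => N y 0) = fun y => (Complex.I * g / k) * pd2 0 w ![y 0, y 1] *
      Complex.exp (Complex.I * g * ((y 2 : ℝ) : ℂ)) := by
    funext y; rw [hN]; simp; ring
  have hN1 : (fun y => N y 1) = fun y => (Complex.I * g / k) * pd2 1 w ![y 0, y 1] *
      Complex.exp (Complex.I * g * ((y 2 : ℝ) : ℂ)) := by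
    funext y; rw [hN]; simp; ring
  have hN2 : (fun y => N y 2) = fun y => (mu ^ 2 / k) * w ![y 0, y 1] *
      Complex.exp (Complex.I * g * ((y 2 : ℝ) : ℂ)) := by
    funext y; rw [hN]; simp; ring
  have hc0 : ∀ y : Fin 3 → ℝ, ![y 0, y 1] ∈ Ω → curl3 N y 0 =
      k * pd2 1 w ![y 0, y 1] * Complex.exp (Complex.I * g * ((y 2 : ℝ) : ℂ)) := by
    intro y hy
    show pd3 1 (fun z => N z 2) y - pd3 2 (fun z => N z 1) y = _
    rw [hN2, hN1, pd3_model w (mu ^ 2 / k) g y (hdiffw _ hy) 1,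
      pd3_model (pd2 1 w) (Complex.I * g / k) g y (hdiffpd 1 _ hy) 2]
    simp only [Matrix.cons_val_one, Matrix.head_cons, Matrix.cons_val_two, Matrix.tail_cons,
      Matrix.cons_val_zero]
    field_simp
    linear_combination (pd2 1 w ![y 0, y 1]) * hrel
      + (-(g ^ 2) * pd2 1 w ![y 0, y 1]) * Complex.I_sq
  have hc1 : ∀ y : Fin 3 → ℝ, ![y 0, y 1] ∈ Ω → curl3 N y 1 =
      (-k) * pd2 0 w ![y 0, y 1] * Complex.exp (Complex.I * g * ((y 2 : ℝ) : ℂ)) := by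
    intro y hy
    show pd3 2 (fun z => N z 0) y - pd3 0 (fun z => N z 2) y = _
    rw [hN0, hN2, pd3_model w (mu ^ 2 / k) g y (hdiffw _ hy) 0,
      pd3_model (pd2 0 w) (Complex.I * g / k) g y (hdiffpd 0 _ hy) 2]
    simp only [Matrix.cons_val_zero, Matrix.cons_val_two, Matrix.tail_cons, Matrix.head_cons]
    field_simp
    linear_combination (-(pd2 0 w ![y 0, y 1])) * hrel
      + (g ^ 2 * pd2 0 w ![y 0, y 1]) * Complex.I_sq
  have hc2 : ∀ y : Fin 3 → ℝ, ![y 0, y 1] ∈ Ω → curl3 N y 2 = 0 := by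
    intro y hy
    show pd3 0 (fun z => N z 1) y - pd3 1 (fun z => N z 0) y = 0
    rw [hN0, hN1, pd3_model (pd2 1 w) (Complex.I * g / k) g y (hdiffpd 1 _ hy) 0,
      pd3_model (pd2 0 w) (Complex.I * g / k) g y (hdiffpd 0 _ hy) 1]
    simp only [Matrix.cons_val_zero, Matrix.cons_val_one, Matrix.head_cons]
    rw [pd2_symm Ω hΩ w hw hy]
    ring
  intro x hx
  have hSopen : IsOpen {y : Fin 3 → ℝ | ![y 0, y 1] ∈ Ω} := by
    have hset : {y : Fin 3 → ℝ | ![y 0, y 1] ∈ Ω} = pi32 ⁻¹' Ω := by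
      ext y; simp [Set.mem_preimage, pi32_apply]
    rw [hset]; exact hΩ.preimage pi32.continuous
  have hmem : {y : Fin 3 → ℝ | ![y 0, y 1] ∈ Ω} ∈ nhds x := hSopen.mem_nhds hx
  have hpdc : ∀ (i' : Fin 3) (Fj G : (Fin 3 → ℝ) → ℂ),
      (∀ y, ![y 0, y 1] ∈ Ω → Fj y = G y) → pd3 i' Fj x = pd3 i' G x := by
    intro i' Fj G h
    unfold pd3
    rw [Filter.EventuallyEq.fderiv_eq (Filter.eventuallyEq_of_mem hmem h)]
  have z2 : ∀ i' : Fin 3, pd3 i' (fun y => curl3 N y 2) x = 0 := by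
    intro i'
    rw [hpdc i' _ (fun _ => (0 : ℂ)) (fun y hy => hc2 y hy)]
    simp [pd3]
  have d0 : ∀ i', pd3 i' (fun y => curl3 N y 0) x
      = pd3 i' (fun y => k * pd2 1 w ![y 0, y 1] *
          Complex.exp (Complex.I * g * ((y 2 : ℝ) : ℂ))) x :=
    fun i' => hpdc i' _ _ (fun y hy => hc0 y hy)
  have d1 : ∀ i', pd3 i' (fun y => curl3 N y 1) x
      = pd3 i' (fun y => (-k) * pd2 0 w ![y 0, y 1] *
          Complex.exp (Complex.I * g * ((y 2 : ℝ) : ℂ))) x :=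
    fun i' => hpdc i' _ _ (fun y hy => hc1 y hy)
  have hb : ∀ ν₁ ν₂ : ℝ, ∀ i : Fin 3,
      crossC ![(ν₁ : ℂ), (ν₂ : ℂ), 0] (N x) i =
        (Complex.exp (Complex.I * g * ((x 2 : ℝ) : ℂ)) / k) *
          (mu ^ 2 * w ![x 0, x 1] * ![(ν₂ : ℂ), -(ν₁ : ℂ), 0] i
            + Complex.I * g *
              ((ν₁ : ℂ) * pd2 1 w ![x 0, x 1] - (ν₂ : ℂ) * pd2 0 w ![x 0, x 1])
              * ![0, 0, 1] i) := by
    intro ν₁ ν₂ i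
    fin_cases i <;>
      · simp [crossC, hN x]
        field_simp
  refine ⟨?_, hb, ?_⟩
  · intro i
    fin_cases i
    · show pd3 1 (fun y => curl3 N y 2) x - pd3 2 (fun y => curl3 N y 1) x
        - k ^ 2 * N x 0 = 0
      rw [z2 1, d1 2, pd3_model (pd2 0 w) (-k) g x (hdiffpd 0 _ hx) 2, hN x 0]
      simp only [Matrix.cons_val_zero, Matrix.cons_val_two, Matrix.tail_cons, Matrix.head_cons]
      field_simp
      ring
    · show pd3 2 (fun y => curl3 N y 0) x - pd3 0 (fun y => curl3 N y 2) x
        - k ^ 2 * N x 1 = 0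
      rw [z2 0, d0 2, pd3_model (pd2 1 w) k g x (hdiffpd 1 _ hx) 2, hN x 1]
      simp only [Matrix.cons_val_one, Matrix.cons_val_two, Matrix.tail_cons, Matrix.head_cons,
        Matrix.cons_val_zero]
      field_simp
      ring
    · show pd3 0 (fun y => curl3 N y 1) x - pd3 1 (fun y => curl3 N y 0) x
        - k ^ 2 * N x 2 = 0
      rw [d1 0, d0 1, pd3_model (pd2 0 w) (-k) g x (hdiffpd 0 _ hx) 0,
        pd3_model (pd2 1 w) k g x (hdiffpd 1 _ hx) 1, hN x 2]
      simp only [Matrix.cons_val_zero, Matrix.cons_val_one, Matrix.head_cons,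
        Matrix.cons_val_two, Matrix.tail_cons]
      field_simp
      linear_combination (-k * Complex.exp (Complex.I * g * ((x 2 : ℝ) : ℂ))) *
        hHelm ![x 0, x 1] hx
  · intro ν₁ ν₂ hw0 hpd0 i
    rw [hb ν₁ ν₂ i, hw0, hpd0]
    simp
end

section
/- Let k₀ > 0 be a real number and let (λ_m)_{m≥1} be a strictly increasing sequence of positive real numbers tending to +∞ with k₀ ∉ {λ_m : m ≥ 1}. Then there exist an open set U ⊆ ℂ containing k₀ and, for each m, a holomorphic function h_m : U → ℂ, such that: (a) h_m(k)² = k² − λ_m² for all k ∈ U and all m; (b) h_m(k₀) = h(k₀, λ_m), the branch square root of k₀² − λ_m²; and (c) sup_{m ≥ 1} sup_{k ∈ U} |h_m(k)|/λ_m < ∞. -/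
open Filter

/-- The branch square root of `k² − l²` with nonnegative real and imaginary parts:
`√(k²−l²)` if `l < k`, and `i·√(l²−k²)` if `l > k`. -/
noncomputable def branchSqrt (k l : ℝ) : ℂ :=
  if l < k then ((Real.sqrt (k ^ 2 - l ^ 2) : ℝ) : ℂ)
  else Complex.I * ((Real.sqrt (l ^ 2 - k ^ 2) : ℝ) : ℂ)

/-- There is a complex neighborhood `U` of a non-cut-off real wavenumber `k₀` on which
all the axial wavenumbers `h_m(k) = √(k² − λ_m²)` extend holomorphically, agreeing with
the branch square root at `k₀`, with a uniform bound `|h_m(k)| ≤ C·λ_m`. -/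
theorem dtn_symbols_analytic (k₀ : ℝ) (hk : 0 < k₀)
    (lam : ℕ → ℝ) (hmono : StrictMono lam) (hpos : ∀ m, 0 < lam m)
    (htop : Tendsto lam atTop atTop) (hne : ∀ m, lam m ≠ k₀) :
    ∃ U : Set ℂ, IsOpen U ∧ ((k₀ : ℝ) : ℂ) ∈ U ∧
      ∃ h : ℕ → ℂ → ℂ,
        (∀ m, DifferentiableOn ℂ (h m) U) ∧
        (∀ m, ∀ z ∈ U, (h m z) ^ 2 = z ^ 2 - ((lam m : ℝ) : ℂ) ^ 2) ∧
        (∀ m, h m ((k₀ : ℝ) : ℂ) = branchSqrt k₀ (lam m)) ∧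
        ∃ C : ℝ, ∀ m, ∀ z ∈ U, ‖h m z‖ / lam m ≤ C := by
  -- a uniform gap ε between k₀ and all the lam m
  obtain ⟨N, hN⟩ := Filter.eventually_atTop.mp (htop.eventually_ge_atTop (k₀ + 1))
  set F : Finset ℝ := insert 1 ((Finset.range N).image fun m => |lam m - k₀|) with hF
  have hFne : F.Nonempty := ⟨1, Finset.mem_insert_self _ _⟩
  set ε : ℝ := F.min' hFne with hεdef
  have hε1 : ε ≤ 1 := Finset.min'_le _ _ (Finset.mem_insert_self _ _)
  have hεpos : 0 < ε := by
    have hmem : ε ∈ F := F.min'_mem hFne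
    rcases Finset.mem_insert.mp hmem with h | h
    · rw [h]; norm_num
    · obtain ⟨m, _, hm⟩ := Finset.mem_image.mp h
      rw [← hm]
      exact abs_pos.mpr (sub_ne_zero.mpr (hne m))
  have hεle : ∀ m, ε ≤ |lam m - k₀| := by
    intro m
    rcases lt_or_ge m N with h | h
    · exact Finset.min'_le _ _ (Finset.mem_insert_of_mem
        (Finset.mem_image_of_mem _ (Finset.mem_range.mpr h)))
    · have h1 := hN m h
      calc ε ≤ 1 := hε1
        _ ≤ |lam m - k₀| := by rw [abs_of_nonneg (by linarith)]; linarith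
  set ε' : ℝ := min ε k₀ with hε'def
  have hε'pos : 0 < ε' := lt_min hεpos hk
  have hε'ε : ε' ≤ ε := min_le_left _ _
  have hε'k : ε' ≤ k₀ := min_le_right _ _
  set δ : ℝ := ε' / 4 with hδdef
  have hδpos : 0 < δ := by positivity
  set U : Set ℂ := Metric.ball ((k₀ : ℝ) : ℂ) δ with hU
  -- bounds on real and imaginary parts inside the ball
  have hre : ∀ z ∈ U, |z.re - k₀| < δ ∧ |z.im| < δ := by
    intro z hz
    rw [hU, Metric.mem_ball, Complex.dist_eq] at hz
    constructor
    · have := Complex.abs_re_le_norm (z - (k₀ : ℂ))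
      simpa using lt_of_le_of_lt this hz
    · have := Complex.abs_im_le_norm (z - (k₀ : ℂ))
      simpa using lt_of_le_of_lt this hz
  -- positivity of the real part of the argument of log, case lam m < k₀
  have key1 : ∀ z ∈ U, ∀ m, lam m < k₀ →
      0 < (z ^ 2 - ((lam m : ℝ) : ℂ) ^ 2).re := by
    intro z hz m hm
    obtain ⟨h1, h2⟩ := hre z hz
    have hle : lam m ≤ k₀ - ε' := by
      have := hεle m
      rw [abs_of_nonpos (by linarith)] at this
      linarith
    have hre2 : (z ^ 2 - ((lam m : ℝ) : ℂ) ^ 2).re = z.re ^ 2 - z.im ^ 2 - lam m ^ 2 := by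
      simp [pow_two, Complex.mul_re]; try ring
    rw [hre2]
    have hre3 : k₀ - δ < z.re := by
      have := abs_lt.mp h1; linarith
    have him : z.im ^ 2 < δ ^ 2 := by
      have := abs_lt.mp h2; nlinarith
    have hlam : lam m ^ 2 ≤ (k₀ - ε') ^ 2 := by nlinarith [hpos m]
    nlinarith [hpos m, hre3, him, hlam]
  -- positivity of the real part of the argument of log, case k₀ < lam m
  have key2 : ∀ z ∈ U, ∀ m, ¬ lam m < k₀ →
      0 < (((lam m : ℝ) : ℂ) ^ 2 - z ^ 2).re := by
    intro z hz m hm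
    obtain ⟨h1, h2⟩ := hre z hz
    have hgt : k₀ + ε' ≤ lam m := by
      have hgt0 : k₀ < lam m := lt_of_le_of_ne (not_lt.mp hm) (Ne.symm (hne m))
      have := hεle m
      rw [abs_of_nonneg (by linarith)] at this
      linarith
    have hre2 : (((lam m : ℝ) : ℂ) ^ 2 - z ^ 2).re = lam m ^ 2 - z.re ^ 2 + z.im ^ 2 := by
      simp [pow_two, Complex.mul_re]; try ring
    rw [hre2]
    have hreb := abs_lt.mp h1
    have hzre : z.re ^ 2 < (k₀ + δ) ^ 2 := by nlinarith
    nlinarith [sq_nonneg z.im]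
  -- the functions
  set H : ℕ → ℂ → ℂ := fun m z => if lam m < k₀
      then Complex.exp ((1 / 2 : ℂ) * Complex.log (z ^ 2 - ((lam m : ℝ) : ℂ) ^ 2))
      else Complex.I * Complex.exp ((1 / 2 : ℂ) * Complex.log (((lam m : ℝ) : ℂ) ^ 2 - z ^ 2))
    with hH
  -- the square identity
  have hsqall : ∀ m, ∀ z ∈ U, (H m z) ^ 2 = z ^ 2 - ((lam m : ℝ) : ℂ) ^ 2 := by
    intro m z hz
    by_cases hm : lam m < k₀
    · rw [hH]; simp only [if_pos hm]
      have hslit : 0 < (z ^ 2 - ((lam m : ℝ) : ℂ) ^ 2).re := key1 z hz m hm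
      have hne0 : z ^ 2 - ((lam m : ℝ) : ℂ) ^ 2 ≠ 0 := by
        intro h; rw [h] at hslit; simp at hslit
      rw [← Complex.exp_nat_mul]
      rw [show ((2 : ℕ) : ℂ) * ((1 / 2 : ℂ) * Complex.log (z ^ 2 - ((lam m : ℝ) : ℂ) ^ 2))
        = Complex.log (z ^ 2 - ((lam m : ℝ) : ℂ) ^ 2) by push_cast; ring]
      exact Complex.exp_log hne0
    · rw [hH]; simp only [if_neg hm]
      have hslit : 0 < (((lam m : ℝ) : ℂ) ^ 2 - z ^ 2).re := key2 z hz m hm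
      have hne0 : ((lam m : ℝ) : ℂ) ^ 2 - z ^ 2 ≠ 0 := by
        intro h; rw [h] at hslit; simp at hslit
      rw [mul_pow, Complex.I_sq, ← Complex.exp_nat_mul]
      rw [show ((2 : ℕ) : ℂ) * ((1 / 2 : ℂ) * Complex.log (((lam m : ℝ) : ℂ) ^ 2 - z ^ 2))
        = Complex.log (((lam m : ℝ) : ℂ) ^ 2 - z ^ 2) by push_cast; ring]
      rw [Complex.exp_log hne0]; ring
  refine ⟨U, Metric.isOpen_ball, Metric.mem_ball_self hδpos, H, ?_, hsqall, ?_, ?_⟩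
  · -- differentiability
    intro m z hz
    rw [hH]
    by_cases hm : lam m < k₀
    · simp only [if_pos hm]
      have d1 : DifferentiableAt ℂ (fun z : ℂ => z ^ 2 - ((lam m : ℝ) : ℂ) ^ 2) z := by
        fun_prop
      have hslit : (z ^ 2 - ((lam m : ℝ) : ℂ) ^ 2) ∈ Complex.slitPlane :=
        Complex.mem_slitPlane_iff.mpr (Or.inl (key1 z hz m hm))
      exact ((((Complex.differentiableAt_log hslit).comp z d1).const_mul
        (1 / 2 : ℂ)).cexp).differentiableWithinAt
    · simp only [if_neg hm]
      have d1 : DifferentiableAt ℂ (fun z : ℂ => ((lam m : ℝ) : ℂ) ^ 2 - z ^ 2) z := by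
        fun_prop
      have hslit : (((lam m : ℝ) : ℂ) ^ 2 - z ^ 2) ∈ Complex.slitPlane :=
        Complex.mem_slitPlane_iff.mpr (Or.inl (key2 z hz m hm))
      exact (((((Complex.differentiableAt_log hslit).comp z d1).const_mul
        (1 / 2 : ℂ)).cexp).const_mul Complex.I).differentiableWithinAt
  · -- value at k₀
    intro m
    rw [hH]
    by_cases hm : lam m < k₀
    · simp only [if_pos hm, branchSqrt, if_pos hm]
      have hx : (0 : ℝ) < k₀ ^ 2 - lam m ^ 2 := by nlinarith [hpos m]
      have hcast : ((k₀ : ℝ) : ℂ) ^ 2 - ((lam m : ℝ) : ℂ) ^ 2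
          = ((k₀ ^ 2 - lam m ^ 2 : ℝ) : ℂ) := by push_cast; ring
      rw [hcast, ← Complex.ofReal_log hx.le]
      rw [show (1 / 2 : ℂ) * ((Real.log (k₀ ^ 2 - lam m ^ 2) : ℝ) : ℂ)
        = ((Real.log (k₀ ^ 2 - lam m ^ 2) * (1 / 2) : ℝ) : ℂ) by push_cast; ring]
      rw [← Complex.ofReal_exp, ← Real.rpow_def_of_pos hx, ← Real.sqrt_eq_rpow]
    · simp only [if_neg hm, branchSqrt, if_neg hm]
      have hgt : k₀ < lam m := lt_of_le_of_ne (not_lt.mp hm) (Ne.symm (hne m))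
      have hx : (0 : ℝ) < lam m ^ 2 - k₀ ^ 2 := by nlinarith
      have hcast : ((lam m : ℝ) : ℂ) ^ 2 - ((k₀ : ℝ) : ℂ) ^ 2
          = ((lam m ^ 2 - k₀ ^ 2 : ℝ) : ℂ) := by push_cast; ring
      rw [hcast, ← Complex.ofReal_log hx.le]
      rw [show (1 / 2 : ℂ) * ((Real.log (lam m ^ 2 - k₀ ^ 2) : ℝ) : ℂ)
        = ((Real.log (lam m ^ 2 - k₀ ^ 2) * (1 / 2) : ℝ) : ℂ) by push_cast; ring]
      rw [← Complex.ofReal_exp, ← Real.rpow_def_of_pos hx, ← Real.sqrt_eq_rpow]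
  · -- uniform bound
    refine ⟨(k₀ + 1) / lam 0 + 1, ?_⟩
    intro m z hz
    have hsq := hsqall m z hz
    have habs : ‖H m z‖ ^ 2 ≤ (k₀ + 1) ^ 2 + lam m ^ 2 := by
      have h1 : ‖H m z‖ ^ 2 = ‖z ^ 2 - ((lam m : ℝ) : ℂ) ^ 2‖ := by
        rw [← norm_pow, hsq]
      have h2 : ‖z ^ 2 - ((lam m : ℝ) : ℂ) ^ 2‖
          ≤ ‖z‖ ^ 2 + lam m ^ 2 := by
        calc ‖z ^ 2 - ((lam m : ℝ) : ℂ) ^ 2‖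
            ≤ ‖z ^ 2‖ + ‖((lam m : ℝ) : ℂ) ^ 2‖ :=
              norm_sub_le _ _
          _ = ‖z‖ ^ 2 + lam m ^ 2 := by
              rw [norm_pow, norm_pow, Complex.norm_real, Real.norm_eq_abs, abs_of_pos (hpos m)]
      have hzb : ‖z‖ ≤ k₀ + 1 := by
        rw [hU, Metric.mem_ball, Complex.dist_eq] at hz
        have htri : ‖z‖ ≤ ‖z - (k₀ : ℂ)‖ + ‖((k₀ : ℝ) : ℂ)‖ := by
          calc ‖z‖ = ‖(z - (k₀ : ℂ)) + ((k₀ : ℝ) : ℂ)‖ := by ring_nf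
            _ ≤ _ := norm_add_le _ _
        have hk0 : ‖((k₀ : ℝ) : ℂ)‖ = k₀ := by
          rw [Complex.norm_real, Real.norm_eq_abs, abs_of_pos hk]
        have hδ1 : δ ≤ 1 := by
          rw [hδdef]; linarith [le_trans hε'ε hε1]
        rw [hk0] at htri; linarith
      have hzsq : ‖z‖ ^ 2 ≤ (k₀ + 1) ^ 2 := by
        nlinarith [norm_nonneg z]
      rw [h1]; linarith
    have hlam0 : lam 0 ≤ lam m := hmono.le_iff_le.mpr (Nat.zero_le m)
    have hC1 : k₀ + 1 ≤ (k₀ + 1) / lam 0 * lam m := by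
      rw [div_mul_eq_mul_div, le_div_iff₀ (hpos 0)]
      nlinarith [hpos 0]
    set a : ℝ := ‖H m z‖ with ha
    have hann : 0 ≤ a := norm_nonneg _
    have hb2 : a ^ 2 ≤ (k₀ + 1 + lam m) ^ 2 := by
      nlinarith [hpos m]
    have hble : a ≤ k₀ + 1 + lam m :=
      (pow_le_pow_iff_left₀ hann (by linarith [hpos m, hk]) two_ne_zero).mp hb2
    have hbnd : a ≤ ((k₀ + 1) / lam 0 + 1) * lam m := by
      have : ((k₀ + 1) / lam 0 + 1) * lam m = (k₀ + 1) / lam 0 * lam m + lam m := by ring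
      rw [this]; linarith
    rw [div_le_iff₀ (hpos m)]
    exact hbnd
end
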